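/- Assume λ > 1, let n ≥ 1 be an integer, and assume (2n+1)π/2 < ξ < π(λ+1)/2, so that 0 < ν_n < ν_{n−1} < … < ν_0 < π/2. Then the meromorphic function a^1_n(u) has, in the open strip 0 < Re u < π/2, poles exactly at the points ν_0, ν_1, …, ν_n; the poles at ν_0 and ν_n are simple, the poles at ν_k for 1 ≤ k ≤ n−1 have order two, and a^1_n has no zeroes in this strip. -/

import Mathlib

open Complex Real Filter Topology

/-- For a real parameter `y`, the trigonometric block
`(y)_u := sin((u+πy)/2)/sin((u−πy)/2)`. -/
noncomputable def blk (y : ℝ) (u : ℂ) : ℂ :=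
  Complex.sin ((u + (Real.pi * y : ℝ)) / 2) / Complex.sin ((u - (Real.pi * y : ℝ)) / 2)

/-- The factor `a^1_n(u)` of the excited boundary reflection amplitudes. -/
noncomputable def a1 (lam ξ : ℝ) (n : ℕ) (u : ℂ) : ℂ :=
  ∏ x ∈ Finset.Icc 1 n,
    (blk (ξ / (lam * Real.pi) + 1 / (2 * lam) - (x : ℝ) / lam) u *
     blk (ξ / (lam * Real.pi) - 1 / (2 * lam) - (x : ℝ) / lam) u) /
    (blk (ξ / (lam * Real.pi) + 1 / (2 * lam) - (x : ℝ) / lam + 1) u *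
     blk (ξ / (lam * Real.pi) - 1 / (2 * lam) - (x : ℝ) / lam + 1) u)

/-- The candidate soliton boundary-binding rapidity `ν_n = ξ/λ − (2n+1)π/(2λ)`. -/
noncomputable def nuP (lam ξ : ℝ) (n : ℕ) : ℝ :=
  ξ / lam - (2 * (n : ℝ) + 1) * Real.pi / (2 * lam)

/-- `f` has a pole of order `m` at `p`. -/
def HasPoleOfOrder (f : ℂ → ℂ) (p : ℂ) (m : ℕ) : Prop :=
  ∃ h : ℂ → ℂ, AnalyticAt ℂ h p ∧ h p ≠ 0 ∧
    ∀ᶠ u in 𝓝[≠] p, f u = h u / (u - p) ^ m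

/-- The `x`-th factor of `a1`. -/
noncomputable def fct (lam ξ : ℝ) (x : ℕ) (u : ℂ) : ℂ :=
  (blk (ξ / (lam * Real.pi) + 1 / (2 * lam) - (x : ℝ) / lam) u *
   blk (ξ / (lam * Real.pi) - 1 / (2 * lam) - (x : ℝ) / lam) u) /
  (blk (ξ / (lam * Real.pi) + 1 / (2 * lam) - (x : ℝ) / lam + 1) u *
   blk (ξ / (lam * Real.pi) - 1 / (2 * lam) - (x : ℝ) / lam + 1) u)

lemma a1_eq (lam ξ : ℝ) (n : ℕ) (u : ℂ) :
    a1 lam ξ n u = ∏ x ∈ Finset.Icc 1 n, fct lam ξ x u := rfl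

lemma a1_eq' (lam ξ : ℝ) (n : ℕ) :
    a1 lam ξ n = fun u => ∏ x ∈ Finset.Icc 1 n, fct lam ξ x u := rfl

/-- In the strip, `sin ((u-c)/2)` does not vanish provided `c` is not too far off
and `u ≠ c`. -/
lemma aux_sin_ne (c : ℝ) (u : ℂ) (hb1 : -(3 * Real.pi / 2) < c)
    (hb2 : c < 3 * Real.pi / 2) (h1 : 0 < u.re) (h2 : u.re < Real.pi / 2)
    (hne : u ≠ (c : ℂ)) : Complex.sin ((u - (c : ℂ)) / 2) ≠ 0 := by
  intro h
  have hπ := Real.pi_pos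
  rw [Complex.sin_eq_zero_iff] at h
  obtain ⟨k, hk⟩ := h
  have hu : u = ((c + 2 * (k : ℝ) * Real.pi : ℝ) : ℂ) := by
    push_cast
    linear_combination 2 * hk
  have hre : u.re = c + 2 * (k : ℝ) * Real.pi := by rw [hu, Complex.ofReal_re]
  rcases lt_trichotomy k 0 with hkk | hkk | hkk
  · have hk1 : (k : ℝ) + 1 ≤ 0 := by
      have h' : k + 1 ≤ 0 := hkk
      exact_mod_cast h'
    nlinarith
  · subst hkk
    apply hne
    rw [hu]; norm_num
  · have hk1 : (1 : ℝ) ≤ (k : ℝ) := by exact_mod_cast hkk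
    nlinarith

/-- A point of the strip is distinct from any real number outside `(0, π/2)`. -/
lemma aux_ne_real (c : ℝ) (u : ℂ) (hc : c ≤ 0 ∨ Real.pi / 2 ≤ c)
    (h1 : 0 < u.re) (h2 : u.re < Real.pi / 2) : u ≠ (c : ℂ) := by
  intro h
  rw [h, Complex.ofReal_re] at h1 h2
  rcases hc with hc | hc <;> linarith

/-- A block is analytic and nonvanishing at strip points away from its pole and zero. -/
lemma blk_good (y c : ℝ) (hcy : Real.pi * y = c) (u : ℂ)
    (h1 : 0 < u.re) (h2 : u.re < Real.pi / 2)
    (hb1 : -(3 * Real.pi / 2) < c) (hb2 : c < 3 * Real.pi / 2)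
    (hne : u ≠ (c : ℂ)) (hne' : u ≠ ((-c : ℝ) : ℂ)) :
    AnalyticAt ℂ (blk y) u ∧ blk y u ≠ 0 := by
  have hd : Complex.sin ((u - (c : ℂ)) / 2) ≠ 0 := aux_sin_ne c u hb1 hb2 h1 h2 hne
  have hn : Complex.sin ((u + (c : ℂ)) / 2) ≠ 0 := by
    have := aux_sin_ne (-c) u (by linarith) (by linarith) h1 h2 hne'
    rw [Complex.ofReal_neg, sub_neg_eq_add] at this
    exact this
  have hb : blk y = fun v => Complex.sin ((v + (c : ℂ)) / 2) / Complex.sin ((v - (c : ℂ)) / 2) := by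
    funext v; rw [blk, hcy]
  rw [hb]
  refine ⟨AnalyticAt.div ?_ ?_ hd, div_ne_zero hn hd⟩
  · exact (Complex.differentiable_sin.comp ((differentiable_id.add_const _).div_const 2)).analyticAt u
  · exact (Complex.differentiable_sin.comp ((differentiable_id.sub_const _).div_const 2)).analyticAt u

/-- A block has a simple pole at `πy` (with explicit factorization). -/
lemma blk_pole (y c : ℝ) (hcy : Real.pi * y = c) (hs : Real.sin c ≠ 0) :
    ∃ g : ℂ → ℂ, AnalyticAt ℂ g (c : ℂ) ∧ g (c : ℂ) ≠ 0 ∧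
      ∀ u : ℂ, u ≠ (c : ℂ) → blk y u = g u / (u - (c : ℂ)) := by
  set p : ℂ := (c : ℂ) with hp
  set f : ℂ → ℂ := fun z => Complex.sin ((z - p) / 2) with hf
  have hfa : AnalyticAt ℂ f p :=
    (Complex.differentiable_sin.comp ((differentiable_id.sub_const _).div_const 2)).analyticAt p
  obtain ⟨q, hq⟩ := hfa
  have hda : AnalyticAt ℂ (dslope f p) p := ⟨_, hq.has_fpower_series_dslope_fslope⟩
  have hder : deriv f p = 1 / 2 := by
    have h1 : HasDerivAt (fun z : ℂ => (z - p) / 2) (1 / 2) p := by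
      simpa using ((hasDerivAt_id p).sub_const p).div_const 2
    have h2 := (Complex.hasDerivAt_sin ((p - p) / 2)).comp p h1
    show deriv (Complex.sin ∘ fun z : ℂ => (z - p) / 2) p = 1 / 2
    rw [h2.deriv]; simp
  have hd0 : dslope f p p ≠ 0 := by
    rw [dslope_same, hder]; norm_num
  have hfp : f p = 0 := by simp [hf]
  refine ⟨fun u => Complex.sin ((u + p) / 2) / dslope f p u, ?_, ?_, ?_⟩
  · exact AnalyticAt.div
      ((Complex.differentiable_sin.comp ((differentiable_id.add_const _).div_const 2)).analyticAt p)
      hda hd0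
  · have hpp : (p + p) / 2 = p := by ring
    have hsp : Complex.sin ((p + p) / 2) ≠ 0 := by
      rw [hpp, hp, ← Complex.ofReal_sin]
      exact_mod_cast hs
    exact div_ne_zero hsp hd0
  · intro u hu
    have hup : u - p ≠ 0 := sub_ne_zero.mpr hu
    have hds : dslope f p u = f u / (u - p) := by
      rw [dslope_of_ne f hu, slope_def_field, hfp, sub_zero]
    have hblk : blk y u = Complex.sin ((u + p) / 2) / f u := by rw [blk, hcy]
    show blk y u = Complex.sin ((u + p) / 2) / dslope f p u / (u - p)
    rw [hblk, hds]
    rcases eq_or_ne (f u) 0 with h0 | h0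
    · simp [h0]
    · field_simp

lemma blk_hasPole (y c : ℝ) (hcy : Real.pi * y = c) (hs : Real.sin c ≠ 0) :
    HasPoleOfOrder (blk y) (c : ℂ) 1 := by
  obtain ⟨g, hg, hg0, he⟩ := blk_pole y c hcy hs
  refine ⟨g, hg, hg0, ?_⟩
  filter_upwards [self_mem_nhdsWithin] with u hu
  rw [pow_one]
  exact he u hu

lemma pole_congr {f f' : ℂ → ℂ} {p : ℂ} {m : ℕ} (h : ∀ u, u ≠ p → f u = f' u)
    (hf : HasPoleOfOrder f p m) : HasPoleOfOrder f' p m := by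
  obtain ⟨h0, ha, hn, he⟩ := hf
  refine ⟨h0, ha, hn, ?_⟩
  filter_upwards [he, self_mem_nhdsWithin] with u h1 h2
  rw [← h u h2]; exact h1

lemma pole_mul_analytic {F f : ℂ → ℂ} {p : ℂ} {m : ℕ} (hF : AnalyticAt ℂ F p)
    (hF0 : F p ≠ 0) (hf : HasPoleOfOrder f p m) :
    HasPoleOfOrder (fun u => F u * f u) p m := by
  obtain ⟨h0, ha, hn, he⟩ := hf
  refine ⟨fun u => F u * h0 u, hF.mul ha, mul_ne_zero hF0 hn, ?_⟩
  filter_upwards [he] with u h1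
  rw [h1, mul_div_assoc]

lemma pole_mul_analytic' {F f : ℂ → ℂ} {p : ℂ} {m : ℕ} (hf : HasPoleOfOrder f p m)
    (hF : AnalyticAt ℂ F p) (hF0 : F p ≠ 0) :
    HasPoleOfOrder (fun u => f u * F u) p m :=
  pole_congr (fun u _ => mul_comm (F u) (f u)) (pole_mul_analytic hF hF0 hf)

lemma pole_mul {f g : ℂ → ℂ} {p : ℂ} {m l : ℕ} (hf : HasPoleOfOrder f p m)
    (hg : HasPoleOfOrder g p l) : HasPoleOfOrder (fun u => f u * g u) p (m + l) := by
  obtain ⟨h0, ha, hn, he⟩ := hf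
  obtain ⟨h0', ha', hn', he'⟩ := hg
  refine ⟨fun u => h0 u * h0' u, ha.mul ha', mul_ne_zero hn hn', ?_⟩
  filter_upwards [he, he'] with u h1 h2
  rw [h1, h2, div_mul_div_comm, ← pow_add]

lemma pole_mul₂ {f g : ℂ → ℂ} {p : ℂ} (hf : HasPoleOfOrder f p 1)
    (hg : HasPoleOfOrder g p 1) : HasPoleOfOrder (fun u => f u * g u) p 2 := by
  simpa using pole_mul hf hg

lemma pole_shape_left {b B D : ℂ → ℂ} {p : ℂ} (hb : HasPoleOfOrder b p 1)
    (hB : AnalyticAt ℂ B p) (hB0 : B p ≠ 0) (hD : AnalyticAt ℂ D p) (hD0 : D p ≠ 0) :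
    HasPoleOfOrder (fun u => (b u * B u) / D u) p 1 := by
  refine pole_congr (fun u _ => ?_) (pole_mul_analytic (hB.div hD hD0) (div_ne_zero hB0 hD0) hb)
  rw [Pi.div_apply, div_mul_eq_mul_div, mul_comm (B u) (b u)]

lemma pole_shape_right {b B D : ℂ → ℂ} {p : ℂ} (hb : HasPoleOfOrder b p 1)
    (hB : AnalyticAt ℂ B p) (hB0 : B p ≠ 0) (hD : AnalyticAt ℂ D p) (hD0 : D p ≠ 0) :
    HasPoleOfOrder (fun u => (B u * b u) / D u) p 1 := by
  refine pole_congr (fun u _ => ?_) (pole_mul_analytic (hB.div hD hD0) (div_ne_zero hB0 hD0) hb)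
  rw [Pi.div_apply, div_mul_eq_mul_div]

/-- A whole factor of `a1` is analytic and nonvanishing at strip points away from the two
relevant binding rapidities. -/
lemma factor_good (y1 y2 c1 c2 : ℝ) (hcy1 : Real.pi * y1 = c1) (hcy2 : Real.pi * y2 = c2)
    (hc1a : 0 < c1) (hc1b : c1 < Real.pi / 2) (hc2a : 0 < c2) (hc2b : c2 < Real.pi / 2)
    (u : ℂ) (h1 : 0 < u.re) (h2 : u.re < Real.pi / 2)
    (hne1 : u ≠ (c1 : ℂ)) (hne2 : u ≠ (c2 : ℂ)) :
    AnalyticAt ℂ (fun v => (blk y1 v * blk y2 v) / (blk (y1 + 1) v * blk (y2 + 1) v)) u ∧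
      (blk y1 u * blk y2 u) / (blk (y1 + 1) u * blk (y2 + 1) u) ≠ 0 := by
  have hπ := Real.pi_pos
  have B1 := blk_good y1 c1 hcy1 u h1 h2 (by linarith) (by linarith) hne1
    (aux_ne_real _ u (Or.inl (by linarith)) h1 h2)
  have B2 := blk_good y2 c2 hcy2 u h1 h2 (by linarith) (by linarith) hne2
    (aux_ne_real _ u (Or.inl (by linarith)) h1 h2)
  have B3 := blk_good (y1 + 1) (c1 + Real.pi) (by rw [mul_add, hcy1, mul_one]) u h1 h2
    (by linarith) (by linarith) (aux_ne_real _ u (Or.inr (by linarith)) h1 h2)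
    (aux_ne_real _ u (Or.inl (by linarith)) h1 h2)
  have B4 := blk_good (y2 + 1) (c2 + Real.pi) (by rw [mul_add, hcy2, mul_one]) u h1 h2
    (by linarith) (by linarith) (aux_ne_real _ u (Or.inr (by linarith)) h1 h2)
    (aux_ne_real _ u (Or.inl (by linarith)) h1 h2)
  exact ⟨(B1.1.mul B2.1).div (B3.1.mul B4.1) (mul_ne_zero B3.2 B4.2),
    div_ne_zero (mul_ne_zero B1.2 B2.2) (mul_ne_zero B3.2 B4.2)⟩

set_option maxHeartbeats 2000000 in
/-- For `λ > 1`, `n ≥ 1` and `(2n+1)π/2 < ξ < π(λ+1)/2`, the function `a^1_n` has, in the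
open strip `0 < Re u < π/2`, poles exactly at `ν_0, …, ν_n`; those at `ν_0` and `ν_n` are
simple, those at `ν_k` for `1 ≤ k ≤ n−1` are of order two, and `a^1_n` has no zeroes
in the strip. -/
theorem stmt2 (lam ξ : ℝ) (hlam : 1 < lam) (n : ℕ) (hn : 1 ≤ n)
    (hlow : (2 * (n : ℝ) + 1) * Real.pi / 2 < ξ)
    (hhigh : ξ < Real.pi * (lam + 1) / 2) :
    (∀ u : ℂ, 0 < u.re → u.re < Real.pi / 2 →
        (∀ k : ℕ, k ≤ n → u ≠ (nuP lam ξ k : ℂ)) →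
        AnalyticAt ℂ (a1 lam ξ n) u ∧ a1 lam ξ n u ≠ 0) ∧
    HasPoleOfOrder (a1 lam ξ n) ((nuP lam ξ 0 : ℝ) : ℂ) 1 ∧
    HasPoleOfOrder (a1 lam ξ n) ((nuP lam ξ n : ℝ) : ℂ) 1 ∧
    (∀ k : ℕ, 1 ≤ k → k ≤ n - 1 →
        HasPoleOfOrder (a1 lam ξ n) ((nuP lam ξ k : ℝ) : ℂ) 2) := by
  have hπ := Real.pi_pos
  have hlam0 : (0 : ℝ) < lam := by linarith
  have hlamne : lam ≠ 0 := hlam0.ne'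
  have hπne : Real.pi ≠ 0 := hπ.ne'
  -- basic facts about the nuP values
  have e : ∀ j : ℕ, nuP lam ξ j * lam = ξ - (2 * (j : ℝ) + 1) * Real.pi / 2 := by
    intro j; unfold nuP; field_simp
  have hnu_pos : ∀ j : ℕ, j ≤ n → 0 < nuP lam ξ j := by
    intro j hj
    have hj' : (j : ℝ) ≤ (n : ℝ) := Nat.cast_le.mpr hj
    nlinarith [e j]
  have hnu_lt : ∀ j : ℕ, nuP lam ξ j < Real.pi / 2 := by
    intro j
    have hj' : (0 : ℝ) ≤ (j : ℝ) := Nat.cast_nonneg j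
    have h : nuP lam ξ j * lam < (Real.pi / 2) * lam := by
      rw [e j]; nlinarith
    exact lt_of_mul_lt_mul_right h hlam0.le
  have hnu_ne : ∀ i j : ℕ, i ≠ j → nuP lam ξ i ≠ nuP lam ξ j := by
    intro i j hij h
    have ei := e i
    have ej := e j
    rw [h] at ei
    have h2 : ((i : ℝ) - (j : ℝ)) * Real.pi = 0 := by linarith
    rcases mul_eq_zero.mp h2 with h3 | h3
    · have : (i : ℝ) = (j : ℝ) := by linarith
      exact hij (Nat.cast_injective this)
    · exact hπne h3
  have hnu_ne' : ∀ i j : ℕ, i ≠ j →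
      ((nuP lam ξ i : ℝ) : ℂ) ≠ ((nuP lam ξ j : ℝ) : ℂ) := by
    intro i j hij h
    exact hnu_ne i j hij (Complex.ofReal_inj.mp h)
  -- the y-parameter identities
  have key1 : ∀ x : ℕ, 1 ≤ x →
      Real.pi * (ξ / (lam * Real.pi) + 1 / (2 * lam) - (x : ℝ) / lam) = nuP lam ξ (x - 1) := by
    intro x hx
    have hc : ((x - 1 : ℕ) : ℝ) = (x : ℝ) - 1 := by
      rw [Nat.cast_sub hx]; simp
    unfold nuP; rw [hc]; field_simp; ring
  have key2 : ∀ x : ℕ,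
      Real.pi * (ξ / (lam * Real.pi) - 1 / (2 * lam) - (x : ℝ) / lam) = nuP lam ξ x := by
    intro x; unfold nuP; field_simp; ring
  have hsin_ne : ∀ k : ℕ, k ≤ n → Real.sin (nuP lam ξ k) ≠ 0 := by
    intro k hk
    exact (Real.sin_pos_of_pos_of_lt_pi (hnu_pos k hk)
      (lt_trans (hnu_lt k) (by linarith))).ne'
  -- each factor is good away from its two rapidities
  have hfactor : ∀ x : ℕ, 1 ≤ x → x ≤ n → ∀ u : ℂ, 0 < u.re → u.re < Real.pi / 2 →
      u ≠ ((nuP lam ξ (x - 1) : ℝ) : ℂ) → u ≠ ((nuP lam ξ x : ℝ) : ℂ) →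
      AnalyticAt ℂ (fct lam ξ x) u ∧ fct lam ξ x u ≠ 0 := by
    intro x hx1 hx2 u h1 h2 hne1 hne2
    exact factor_good _ _ _ _ (key1 x hx1) (key2 x) (hnu_pos _ (by omega)) (hnu_lt _)
      (hnu_pos _ hx2) (hnu_lt _) u h1 h2 hne1 hne2
  -- rest products are analytic and nonvanishing at a pole point
  have hrest : ∀ k : ℕ, k ≤ n → ∀ s : Finset ℕ, s ⊆ Finset.Icc 1 n →
      (∀ x ∈ s, x ≠ k ∧ x ≠ k + 1) →
      AnalyticAt ℂ (fun v => ∏ x ∈ s, fct lam ξ x v) ((nuP lam ξ k : ℝ) : ℂ) ∧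
        (∏ x ∈ s, fct lam ξ x ((nuP lam ξ k : ℝ) : ℂ)) ≠ 0 := by
    intro k hk s hsub hcond
    have hp1 : (0 : ℝ) < ((nuP lam ξ k : ℝ) : ℂ).re := by
      rw [Complex.ofReal_re]; exact hnu_pos k hk
    have hp2 : ((nuP lam ξ k : ℝ) : ℂ).re < Real.pi / 2 := by
      rw [Complex.ofReal_re]; exact hnu_lt k
    have hx : ∀ x ∈ s, AnalyticAt ℂ (fct lam ξ x) ((nuP lam ξ k : ℝ) : ℂ) ∧
        fct lam ξ x ((nuP lam ξ k : ℝ) : ℂ) ≠ 0 := by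
      intro x hxs
      have hxI := Finset.mem_Icc.mp (hsub hxs)
      obtain ⟨hxk, hxk1⟩ := hcond x hxs
      exact hfactor x hxI.1 hxI.2 _ hp1 hp2
        (hnu_ne' k (x - 1) (by omega)) (hnu_ne' k x (by omega))
    exact ⟨Finset.analyticAt_fun_prod s (fun x hxs => (hx x hxs).1),
      Finset.prod_ne_zero_iff.mpr (fun x hxs => (hx x hxs).2)⟩
  refine ⟨?_, ?_, ?_, ?_⟩
  -- Part 1: analytic and nonvanishing away from the rapidities
  · intro u h1 h2 hu
    have hx : ∀ x ∈ Finset.Icc 1 n, AnalyticAt ℂ (fct lam ξ x) u ∧ fct lam ξ x u ≠ 0 := by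
      intro x hxs
      have hxI := Finset.mem_Icc.mp hxs
      exact hfactor x hxI.1 hxI.2 u h1 h2 (hu (x - 1) (by omega)) (hu x hxI.2)
    constructor
    · rw [a1_eq']
      exact Finset.analyticAt_fun_prod _ (fun x hxs => (hx x hxs).1)
    · rw [a1_eq]
      exact Finset.prod_ne_zero_iff.mpr (fun x hxs => (hx x hxs).2)
  -- Pole at ν_0
  · have h1n : 1 ∈ Finset.Icc 1 n := Finset.mem_Icc.mpr ⟨le_refl 1, hn⟩
    have hkey : Real.pi * (ξ / (lam * Real.pi) + 1 / (2 * lam) - ((1 : ℕ) : ℝ) / lam)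
        = nuP lam ξ 0 := key1 1 (le_refl 1)
    have hb : HasPoleOfOrder
        (blk (ξ / (lam * Real.pi) + 1 / (2 * lam) - ((1 : ℕ) : ℝ) / lam))
        ((nuP lam ξ 0 : ℝ) : ℂ) 1 := blk_hasPole _ _ hkey (hsin_ne 0 (by omega))
    have hp1 : (0 : ℝ) < ((nuP lam ξ 0 : ℝ) : ℂ).re := by
      rw [Complex.ofReal_re]; exact hnu_pos 0 (by omega)
    have hp2 : ((nuP lam ξ 0 : ℝ) : ℂ).re < Real.pi / 2 := by
      rw [Complex.ofReal_re]; exact hnu_lt 0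
    -- second numerator block of the first factor
    have B2 := blk_good (ξ / (lam * Real.pi) - 1 / (2 * lam) - ((1 : ℕ) : ℝ) / lam)
      (nuP lam ξ 1) (key2 1) _ hp1 hp2
      (by have := hnu_pos 1 hn; linarith) (by have := hnu_lt 1; linarith)
      (hnu_ne' 0 1 (by omega)) (aux_ne_real _ _ (Or.inl (by have := hnu_pos 1 hn; linarith)) hp1 hp2)
    -- the denominator of the first factor
    have B3 := blk_good (ξ / (lam * Real.pi) + 1 / (2 * lam) - ((1 : ℕ) : ℝ) / lam + 1)
      (nuP lam ξ 0 + Real.pi) (by rw [mul_add, hkey, mul_one]) _ hp1 hp2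
      (by have := hnu_pos 0 (by omega); linarith) (by have := hnu_lt 0; linarith)
      (aux_ne_real _ _ (Or.inr (by have := hnu_pos 0 (by omega); linarith)) hp1 hp2)
      (aux_ne_real _ _ (Or.inl (by have := hnu_pos 0 (by omega); linarith)) hp1 hp2)
    have B4 := blk_good (ξ / (lam * Real.pi) - 1 / (2 * lam) - ((1 : ℕ) : ℝ) / lam + 1)
      (nuP lam ξ 1 + Real.pi) (by rw [mul_add, key2 1, mul_one]) _ hp1 hp2
      (by have := hnu_pos 1 hn; linarith) (by have := hnu_lt 1; linarith)
      (aux_ne_real _ _ (Or.inr (by have := hnu_pos 1 hn; linarith)) hp1 hp2)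
      (aux_ne_real _ _ (Or.inl (by have := hnu_pos 1 hn; linarith)) hp1 hp2)
    have hF1 : HasPoleOfOrder (fct lam ξ 1) ((nuP lam ξ 0 : ℝ) : ℂ) 1 := by
      exact pole_shape_left hb B2.1 B2.2 (B3.1.mul B4.1) (mul_ne_zero B3.2 B4.2)
    have hR := hrest 0 (by omega) ((Finset.Icc 1 n).erase 1) (Finset.erase_subset _ _)
      (fun x hxs => by
        refine ⟨?_, (Finset.mem_erase.mp hxs).1⟩
        have h1 := (Finset.mem_Icc.mp (Finset.mem_of_mem_erase hxs)).1
        omega)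
    have hdecomp : ∀ u : ℂ, a1 lam ξ n u
        = fct lam ξ 1 u * ∏ x ∈ (Finset.Icc 1 n).erase 1, fct lam ξ x u := by
      intro u
      rw [a1_eq, ← Finset.mul_prod_erase _ _ h1n]
    exact pole_congr (fun u _ => (hdecomp u).symm)
      (pole_mul_analytic' hF1 hR.1 hR.2)
  -- Pole at ν_n
  · have hnn : n ∈ Finset.Icc 1 n := Finset.mem_Icc.mpr ⟨hn, le_refl n⟩
    have hb : HasPoleOfOrder
        (blk (ξ / (lam * Real.pi) - 1 / (2 * lam) - ((n : ℕ) : ℝ) / lam))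
        ((nuP lam ξ n : ℝ) : ℂ) 1 := blk_hasPole _ _ (key2 n) (hsin_ne n (le_refl n))
    have hp1 : (0 : ℝ) < ((nuP lam ξ n : ℝ) : ℂ).re := by
      rw [Complex.ofReal_re]; exact hnu_pos n (le_refl n)
    have hp2 : ((nuP lam ξ n : ℝ) : ℂ).re < Real.pi / 2 := by
      rw [Complex.ofReal_re]; exact hnu_lt n
    have hposn1 : 0 < nuP lam ξ (n - 1) := hnu_pos (n - 1) (by omega)
    have hltn1 := hnu_lt (n - 1)
    have B1 := blk_good (ξ / (lam * Real.pi) + 1 / (2 * lam) - ((n : ℕ) : ℝ) / lam)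
      (nuP lam ξ (n - 1)) (key1 n hn) _ hp1 hp2
      (by linarith) (by linarith)
      (hnu_ne' n (n - 1) (by omega)) (aux_ne_real _ _ (Or.inl (by linarith)) hp1 hp2)
    have B3 := blk_good (ξ / (lam * Real.pi) + 1 / (2 * lam) - ((n : ℕ) : ℝ) / lam + 1)
      (nuP lam ξ (n - 1) + Real.pi) (by rw [mul_add, key1 n hn, mul_one]) _ hp1 hp2
      (by linarith) (by linarith)
      (aux_ne_real _ _ (Or.inr (by linarith)) hp1 hp2)
      (aux_ne_real _ _ (Or.inl (by linarith)) hp1 hp2)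
    have hposn : 0 < nuP lam ξ n := hnu_pos n (le_refl n)
    have hltn := hnu_lt n
    have B4 := blk_good (ξ / (lam * Real.pi) - 1 / (2 * lam) - ((n : ℕ) : ℝ) / lam + 1)
      (nuP lam ξ n + Real.pi) (by rw [mul_add, key2 n, mul_one]) _ hp1 hp2
      (by linarith) (by linarith)
      (aux_ne_real _ _ (Or.inr (by linarith)) hp1 hp2)
      (aux_ne_real _ _ (Or.inl (by linarith)) hp1 hp2)
    have hFn : HasPoleOfOrder (fct lam ξ n) ((nuP lam ξ n : ℝ) : ℂ) 1 := by
      exact pole_shape_right hb B1.1 B1.2 (B3.1.mul B4.1) (mul_ne_zero B3.2 B4.2)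
    have hR := hrest n (le_refl n) ((Finset.Icc 1 n).erase n) (Finset.erase_subset _ _)
      (fun x hxs => by
        refine ⟨(Finset.mem_erase.mp hxs).1, ?_⟩
        have h1 := (Finset.mem_Icc.mp (Finset.mem_of_mem_erase hxs)).2
        omega)
    have hdecomp : ∀ u : ℂ, a1 lam ξ n u
        = fct lam ξ n u * ∏ x ∈ (Finset.Icc 1 n).erase n, fct lam ξ x u := by
      intro u
      rw [a1_eq, ← Finset.mul_prod_erase _ _ hnn]
    exact pole_congr (fun u _ => (hdecomp u).symm)
      (pole_mul_analytic' hFn hR.1 hR.2)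
  -- Poles of order two at the intermediate ν_k
  · intro k hk1 hk2
    have hkn : k + 1 ≤ n := by omega
    have hkI : k ∈ Finset.Icc 1 n := Finset.mem_Icc.mpr ⟨hk1, by omega⟩
    have hk1I : k + 1 ∈ (Finset.Icc 1 n).erase k :=
      Finset.mem_erase.mpr ⟨by omega, Finset.mem_Icc.mpr ⟨by omega, hkn⟩⟩
    have hp1 : (0 : ℝ) < ((nuP lam ξ k : ℝ) : ℂ).re := by
      rw [Complex.ofReal_re]; exact hnu_pos k (by omega)
    have hp2 : ((nuP lam ξ k : ℝ) : ℂ).re < Real.pi / 2 := by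
      rw [Complex.ofReal_re]; exact hnu_lt k
    have hposk : 0 < nuP lam ξ k := hnu_pos k (by omega)
    have hltk := hnu_lt k
    have hposkm : 0 < nuP lam ξ (k - 1) := hnu_pos (k - 1) (by omega)
    have hltkm := hnu_lt (k - 1)
    have hposk1 : 0 < nuP lam ξ (k + 1) := hnu_pos (k + 1) hkn
    have hltk1 := hnu_lt (k + 1)
    -- pole of factor k, coming from its second numerator block
    have hbk : HasPoleOfOrder
        (blk (ξ / (lam * Real.pi) - 1 / (2 * lam) - ((k : ℕ) : ℝ) / lam))
        ((nuP lam ξ k : ℝ) : ℂ) 1 := blk_hasPole _ _ (key2 k) (hsin_ne k (by omega))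
    have B1 := blk_good (ξ / (lam * Real.pi) + 1 / (2 * lam) - ((k : ℕ) : ℝ) / lam)
      (nuP lam ξ (k - 1)) (key1 k hk1) _ hp1 hp2
      (by linarith) (by linarith)
      (hnu_ne' k (k - 1) (by omega)) (aux_ne_real _ _ (Or.inl (by linarith)) hp1 hp2)
    have B3 := blk_good (ξ / (lam * Real.pi) + 1 / (2 * lam) - ((k : ℕ) : ℝ) / lam + 1)
      (nuP lam ξ (k - 1) + Real.pi) (by rw [mul_add, key1 k hk1, mul_one]) _ hp1 hp2
      (by linarith) (by linarith)
      (aux_ne_real _ _ (Or.inr (by linarith)) hp1 hp2)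
      (aux_ne_real _ _ (Or.inl (by linarith)) hp1 hp2)
    have B4 := blk_good (ξ / (lam * Real.pi) - 1 / (2 * lam) - ((k : ℕ) : ℝ) / lam + 1)
      (nuP lam ξ k + Real.pi) (by rw [mul_add, key2 k, mul_one]) _ hp1 hp2
      (by linarith) (by linarith)
      (aux_ne_real _ _ (Or.inr (by linarith)) hp1 hp2)
      (aux_ne_real _ _ (Or.inl (by linarith)) hp1 hp2)
    have hFk : HasPoleOfOrder (fct lam ξ k) ((nuP lam ξ k : ℝ) : ℂ) 1 := by
      exact pole_shape_right hbk B1.1 B1.2 (B3.1.mul B4.1) (mul_ne_zero B3.2 B4.2)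
    -- pole of factor k+1, coming from its first numerator block
    have hkey1 : Real.pi * (ξ / (lam * Real.pi) + 1 / (2 * lam) - ((k + 1 : ℕ) : ℝ) / lam)
        = nuP lam ξ k := by
      have h := key1 (k + 1) (by omega)
      rwa [Nat.add_sub_cancel] at h
    have hbk1 : HasPoleOfOrder
        (blk (ξ / (lam * Real.pi) + 1 / (2 * lam) - ((k + 1 : ℕ) : ℝ) / lam))
        ((nuP lam ξ k : ℝ) : ℂ) 1 := blk_hasPole _ _ hkey1 (hsin_ne k (by omega))
    have C2 := blk_good (ξ / (lam * Real.pi) - 1 / (2 * lam) - ((k + 1 : ℕ) : ℝ) / lam)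
      (nuP lam ξ (k + 1)) (key2 (k + 1)) _ hp1 hp2
      (by linarith) (by linarith)
      (hnu_ne' k (k + 1) (by omega)) (aux_ne_real _ _ (Or.inl (by linarith)) hp1 hp2)
    have C3 := blk_good (ξ / (lam * Real.pi) + 1 / (2 * lam) - ((k + 1 : ℕ) : ℝ) / lam + 1)
      (nuP lam ξ k + Real.pi) (by rw [mul_add, hkey1, mul_one]) _ hp1 hp2
      (by linarith) (by linarith)
      (aux_ne_real _ _ (Or.inr (by linarith)) hp1 hp2)
      (aux_ne_real _ _ (Or.inl (by linarith)) hp1 hp2)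
    have C4 := blk_good (ξ / (lam * Real.pi) - 1 / (2 * lam) - ((k + 1 : ℕ) : ℝ) / lam + 1)
      (nuP lam ξ (k + 1) + Real.pi) (by rw [mul_add, key2 (k + 1), mul_one]) _ hp1 hp2
      (by linarith) (by linarith)
      (aux_ne_real _ _ (Or.inr (by linarith)) hp1 hp2)
      (aux_ne_real _ _ (Or.inl (by linarith)) hp1 hp2)
    have hFk1 : HasPoleOfOrder (fct lam ξ (k + 1)) ((nuP lam ξ k : ℝ) : ℂ) 1 := by
      exact pole_shape_left hbk1 C2.1 C2.2 (C3.1.mul C4.1) (mul_ne_zero C3.2 C4.2)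
    -- the rest
    have hR := hrest k (by omega) (((Finset.Icc 1 n).erase k).erase (k + 1))
      (fun x hxs => Finset.mem_of_mem_erase (Finset.mem_of_mem_erase hxs))
      (fun x hxs => ⟨(Finset.mem_erase.mp (Finset.mem_of_mem_erase hxs)).1,
        (Finset.mem_erase.mp hxs).1⟩)
    have hdecomp : ∀ u : ℂ, a1 lam ξ n u = fct lam ξ k u *
        (fct lam ξ (k + 1) u * ∏ x ∈ ((Finset.Icc 1 n).erase k).erase (k + 1), fct lam ξ x u) := by
      intro u
      rw [a1_eq, ← Finset.mul_prod_erase _ _ hkI, ← Finset.mul_prod_erase _ _ hk1I]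
    have h2 : HasPoleOfOrder (fun u => fct lam ξ k u *
        (fct lam ξ (k + 1) u * ∏ x ∈ ((Finset.Icc 1 n).erase k).erase (k + 1), fct lam ξ x u))
        ((nuP lam ξ k : ℝ) : ℂ) 2 :=
      pole_mul₂ hFk (pole_mul_analytic' hFk1 hR.1 hR.2)
    exact pole_congr (fun u _ => (hdecomp u).symm) h2
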